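/- arXiv:2405.00368 — 5 statements merged into one kernel-verified Lean document; each statement's English description precedes it below -/
import Mathlib

section
/- For all real c and s with 0 < c < 1 and 0 < s < 4, the minimum of the three quantities (1/2)·log₂ A(c,s), (1/2)·log₂ B(c,s), and (1/2)·log₂ C(c,s) equals (1/2)·log₂ B(c,s); equivalently, B(c,s) ≤ A(c,s) and B(c,s) ≤ C(c,s). -/
open Real

/-- `A c s = c²·s + 1`, the argument of the logarithm in `TE(φ→X) = TE(φ→Y)`. -/
noncomputable def A (c s : ℝ) : ℝ := c ^ 2 * s + 1

/-- `B c s = (4c⁴s + 2c² + 2)/(2c² + 2)`, the argument of the logarithm in `TE(φ→Z)`. -/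
noncomputable def B (c s : ℝ) : ℝ := (4 * c ^ 4 * s + 2 * c ^ 2 + 2) / (2 * c ^ 2 + 2)

/-- `C c s = (4c⁴s + 2c² + 2)/(c³s/(c²s+1) + c² + 2)`, the argument of the logarithm in
`TE(X→Z) = TE(Y→Z)`. -/
noncomputable def C (c s : ℝ) : ℝ :=
  (4 * c ^ 4 * s + 2 * c ^ 2 + 2) / (c ^ 3 * s / (c ^ 2 * s + 1) + c ^ 2 + 2)

/-- For `0 < c < 1` and `0 < s < 4`, the minimum of the three transfer-entropy expressions
is `(1/2)·log₂ B(c,s)`; equivalently `B(c,s) ≤ A(c,s)` and `B(c,s) ≤ C(c,s)`. -/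
theorem stmt0 (c s : ℝ) (hc0 : 0 < c) (hc1 : c < 1) (hs0 : 0 < s) (hs4 : s < 4) :
    min (min ((1 / 2) * Real.logb 2 (A c s)) ((1 / 2) * Real.logb 2 (B c s)))
        ((1 / 2) * Real.logb 2 (C c s)) = (1 / 2) * Real.logb 2 (B c s)
      ∧ B c s ≤ A c s ∧ B c s ≤ C c s := by
  have hden : (0:ℝ) < 2 * c ^ 2 + 2 := by positivity
  have hcs : (0:ℝ) < c ^ 2 * s + 1 := by positivity
  have hDC : (0:ℝ) < c ^ 3 * s / (c ^ 2 * s + 1) + c ^ 2 + 2 := by positivity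
  have hNum : (0:ℝ) < 4 * c ^ 4 * s + 2 * c ^ 2 + 2 := by positivity
  have hB1 : (1:ℝ) ≤ B c s := by
    rw [B, le_div_iff₀ hden]
    nlinarith [sq_nonneg c, mul_pos (pow_pos hc0 4) hs0]
  have hBA : B c s ≤ A c s := by
    rw [B, A, div_le_iff₀ hden]
    nlinarith [mul_pos (mul_pos (pow_pos hc0 2) hs0) (show (0:ℝ) < 1 - c ^ 2 by nlinarith)]
  have hDle : c ^ 3 * s / (c ^ 2 * s + 1) + c ^ 2 + 2 ≤ 2 * c ^ 2 + 2 := by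
    have h : c ^ 3 * s / (c ^ 2 * s + 1) ≤ c ^ 2 := by
      rw [div_le_iff₀ hcs]
      nlinarith [mul_nonneg (mul_nonneg hs0.le (sq_nonneg c)) (sq_nonneg (2 * c - 1)), mul_lt_mul_of_pos_left hs4 (pow_pos hc0 2)]
    linarith
  have hBC : B c s ≤ C c s := by
    rw [B, C]
    exact div_le_div_of_nonneg_left hNum.le hDC hDle
  refine ⟨?_, hBA, hBC⟩
  have hBplog : Real.logb 2 (B c s) ≤ Real.logb 2 (A c s) :=
    Real.logb_le_logb_of_le (by norm_num) (by linarith) hBA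
  have hBC' : Real.logb 2 (B c s) ≤ Real.logb 2 (C c s) :=
    Real.logb_le_logb_of_le (by norm_num) (by linarith) hBC
  rw [min_eq_right (by linarith : (1:ℝ)/2 * Real.logb 2 (B c s) ≤ 1/2 * Real.logb 2 (A c s)), min_eq_left (by linarith)]
end

section
/- For all real c and s with c ≥ 1 and 0 < s < 4, the minimum of the three quantities (1/2)·log₂ A(c,s), (1/2)·log₂ B(c,s), and (1/2)·log₂ C(c,s) equals (1/2)·log₂ A(c,s); equivalently, A(c,s) ≤ B(c,s) and A(c,s) ≤ C(c,s). -/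
open Real

/-- For `c ≥ 1` and `0 < s < 4`, the minimum of the three transfer-entropy expressions
is `(1/2)·log₂ A(c,s)`; equivalently `A(c,s) ≤ B(c,s)` and `A(c,s) ≤ C(c,s)`. -/
theorem stmt1 (c s : ℝ) (hc : 1 ≤ c) (hs0 : 0 < s) (hs4 : s < 4) :
    min (min ((1 / 2) * Real.logb 2 (A c s)) ((1 / 2) * Real.logb 2 (B c s)))
        ((1 / 2) * Real.logb 2 (C c s)) = (1 / 2) * Real.logb 2 (A c s)
      ∧ A c s ≤ B c s ∧ A c s ≤ C c s := by
  have hc0 : (0:ℝ) < c := lt_of_lt_of_le one_pos hc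
  have hc2 : (1:ℝ) ≤ c ^ 2 := one_le_pow₀ hc
  have hA0 : (0:ℝ) < A c s := by unfold A; positivity
  have hd1 : (0:ℝ) < c ^ 2 * s + 1 := by positivity
  have hdC : (0:ℝ) < c ^ 3 * s / (c ^ 2 * s + 1) + c ^ 2 + 2 := by positivity
  have hAB : A c s ≤ B c s := by
    unfold A B
    rw [le_div_iff₀ (by positivity)]
    nlinarith [mul_nonneg (mul_nonneg (sq_nonneg c) (sub_nonneg.mpr hc2)) hs0.le]
  have hAC : A c s ≤ C c s := by
    unfold A C
    rw [le_div_iff₀ hdC]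
    have expand : (c ^ 2 * s + 1) * (c ^ 3 * s / (c ^ 2 * s + 1) + c ^ 2 + 2)
        = c ^ 3 * s + (c ^ 2 * s + 1) * (c ^ 2 + 2) := by
      field_simp
      ring
    rw [expand]
    nlinarith [mul_nonneg (mul_nonneg (pow_pos hc0 3).le (sub_nonneg.mpr hc)) hs0.le,
      mul_nonneg (mul_nonneg (sq_nonneg c) (sub_nonneg.mpr hc2)) hs0.le]
  have hlogAB : (1 / 2) * Real.logb 2 (A c s) ≤ (1 / 2) * Real.logb 2 (B c s) :=
    mul_le_mul_of_nonneg_left (Real.logb_le_logb_of_le (by norm_num) hA0 hAB) (by norm_num)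
  have hlogAC : (1 / 2) * Real.logb 2 (A c s) ≤ (1 / 2) * Real.logb 2 (C c s) :=
    mul_le_mul_of_nonneg_left (Real.logb_le_logb_of_le (by norm_num) hA0 hAC) (by norm_num)
  exact ⟨by rw [min_eq_left hlogAB, min_eq_left hlogAC], hAB, hAC⟩
end

section
/- For all real c and s with s ≥ 4 and 1/2 − √(1/4 − 1/s) ≤ c ≤ 1/2 + √(1/4 − 1/s) (these bounds are the two real roots of the quadratic s·c² − s·c + 1 = 0), the minimum of the three quantities (1/2)·log₂ A(c,s), (1/2)·log₂ B(c,s), and (1/2)·log₂ C(c,s) equals (1/2)·log₂ C(c,s); equivalently, C(c,s) ≤ A(c,s) and C(c,s) ≤ B(c,s). -/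
open Real

/-- For `s ≥ 4` and `c` between the two real roots `1/2 ∓ √(1/4 − 1/s)` of
`s·c² − s·c + 1 = 0`, the minimum of the three transfer-entropy expressions is
`(1/2)·log₂ C(c,s)`; equivalently `C(c,s) ≤ A(c,s)` and `C(c,s) ≤ B(c,s)`. -/
theorem stmt2 (c s : ℝ) (hs : 4 ≤ s)
    (hc_lo : 1 / 2 - Real.sqrt (1 / 4 - 1 / s) ≤ c)
    (hc_hi : c ≤ 1 / 2 + Real.sqrt (1 / 4 - 1 / s)) :
    min (min ((1 / 2) * Real.logb 2 (A c s)) ((1 / 2) * Real.logb 2 (B c s)))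
        ((1 / 2) * Real.logb 2 (C c s)) = (1 / 2) * Real.logb 2 (C c s)
      ∧ C c s ≤ A c s ∧ C c s ≤ B c s := by
  have hs0 : (0:ℝ) < s := by linarith
  have h14 : (0:ℝ) ≤ 1 / 4 - 1 / s := by
    have : 1 / s ≤ 1 / 4 := by
      rw [div_le_div_iff₀ hs0 (by norm_num)]; linarith
    linarith
  have hr := Real.sq_sqrt h14
  have hsq : (c - 1 / 2) ^ 2 ≤ 1 / 4 - 1 / s := by
    nlinarith [Real.sqrt_nonneg (1 / 4 - 1 / s)]
  have hkey : s * c ^ 2 - s * c + 1 ≤ 0 := by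
    have h2 : s * ((c - 1 / 2) ^ 2) ≤ s * (1 / 4 - 1 / s) :=
      mul_le_mul_of_nonneg_left hsq hs0.le
    have h3 : s * (1 / s) = 1 := mul_one_div_cancel hs0.ne'
    nlinarith
  have hc0 : 0 < c := by nlinarith
  have hc1 : c < 1 := by nlinarith [mul_pos hs0 hc0]
  have hden1 : 0 < c ^ 2 * s + 1 := by positivity
  have hN : 0 < 4 * c ^ 4 * s + 2 * c ^ 2 + 2 := by positivity
  have hD : 0 < c ^ 3 * s / (c ^ 2 * s + 1) + c ^ 2 + 2 := by positivity
  have h1 : c ^ 2 * (s * c ^ 2 - s * c + 1) ≤ 0 :=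
    mul_nonpos_of_nonneg_of_nonpos (sq_nonneg c) hkey
  have ht : c ^ 3 * s / (c ^ 2 * s + 1) * (c ^ 2 * s + 1) = c ^ 3 * s :=
    div_mul_cancel₀ _ hden1.ne'
  have hCA : C c s ≤ A c s := by
    unfold A C
    rw [div_le_iff₀ hD]
    have hcs : 0 ≤ c ^ 2 * s * (1 - c) :=
      mul_nonneg (by positivity) (by linarith)
    nlinarith [ht, h1, sq_nonneg c]
  have hct : c ^ 2 ≤ c ^ 3 * s / (c ^ 2 * s + 1) := by
    rw [le_div_iff₀ hden1]
    nlinarith [h1]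
  have hCB : C c s ≤ B c s := by
    unfold B C
    apply div_le_div_of_nonneg_left hN.le (by positivity)
    linarith
  have hC0 : 0 < C c s := div_pos hN hD
  have hA0 : 0 < A c s := lt_of_lt_of_le hC0 hCA
  have hB0 : 0 < B c s := lt_of_lt_of_le hC0 hCB
  refine ⟨?_, hCA, hCB⟩
  apply min_eq_right
  apply le_min
  · have := Real.logb_le_logb_of_le (b := 2) one_lt_two hC0 hCA
    linarith
  · have := Real.logb_le_logb_of_le (b := 2) one_lt_two hC0 hCB
    linarith
end

section
/- For all real c > 0 and s > 0, B(c,s) ≤ A(c,s) if and only if c ≤ 1. -/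
/-- For all real `c > 0` and `s > 0`, `B(c,s) ≤ A(c,s)` if and only if `c ≤ 1`. -/
theorem stmt3 (c s : ℝ) (hc : 0 < c) (hs : 0 < s) :
    B c s ≤ A c s ↔ c ≤ 1 := by
  have hd : (0:ℝ) < 2 * c ^ 2 + 2 := by positivity
  rw [A, B, div_le_iff₀ hd]
  constructor
  · intro h
    by_contra hgt
    push_neg at hgt
    nlinarith [mul_pos (mul_pos hs (pow_pos hc 2))
      (mul_pos (sub_pos.2 hgt) (show (0:ℝ) < c + 1 by linarith))]
  · intro h
    nlinarith [mul_nonneg (mul_nonneg hs.le (sq_nonneg c))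
      (mul_nonneg (sub_nonneg.2 h) (show (0:ℝ) ≤ c + 1 by linarith))]
end

section
/- For all real c > 0 and s > 0, B(c,s) ≤ C(c,s) if and only if s·c² − s·c + 1 ≥ 0. -/
/-- For all real `c > 0` and `s > 0`, `B(c,s) ≤ C(c,s)` iff `s·c² − s·c + 1 ≥ 0`. -/
theorem stmt4 (c s : ℝ) (hc : 0 < c) (hs : 0 < s) :
    B c s ≤ C c s ↔ 0 ≤ s * c ^ 2 - s * c + 1 := by
  have hq : (0:ℝ) < c ^ 2 * s + 1 := by positivity
  have hN : (0:ℝ) < 4 * c ^ 4 * s + 2 * c ^ 2 + 2 := by positivity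
  have hD1 : (0:ℝ) < 2 * c ^ 2 + 2 := by positivity
  have hD2 : (0:ℝ) < c ^ 3 * s / (c ^ 2 * s + 1) + c ^ 2 + 2 := by positivity
  unfold B C
  rw [div_le_div_iff₀ hD1 hD2]
  set t := c ^ 3 * s / (c ^ 2 * s + 1) with htdef
  have ht : t * (c ^ 2 * s + 1) = c ^ 3 * s := div_mul_cancel₀ _ (ne_of_gt hq)
  constructor
  · intro h
    have h2 : t ≤ c ^ 2 := by nlinarith
    have h3 : c ^ 3 * s ≤ c ^ 2 * (c ^ 2 * s + 1) := by
      calc c ^ 3 * s = t * (c ^ 2 * s + 1) := ht.symm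
        _ ≤ c ^ 2 * (c ^ 2 * s + 1) := by
          exact mul_le_mul_of_nonneg_right h2 (le_of_lt hq)
    nlinarith [mul_pos hc hc]
  · intro h
    have h2 : t ≤ c ^ 2 := by
      rw [htdef, div_le_iff₀ hq]; nlinarith [mul_nonneg (le_of_lt (mul_pos hc hc)) h]
    nlinarith
end
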